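/- For all s, t ≥ 1 and cycle lengths l_1, ..., l_{t−1} ≥ 3, the graphs K_1 ∨ (C_3 ∪ C_{l_1} ∪ ... ∪ C_{l_{t−1}} ∪ s K_1) and K_1 ∨ (K_{1,3} ∪ C_{l_1} ∪ ... ∪ C_{l_{t−1}} ∪ (s−1) K_1) are non-isomorphic but have the same signless Laplacian spectrum (with multiplicities). -/

import Mathlib

open SimpleGraph Matrix Finset
attribute [local instance] Classical.propDecidable
set_option linter.unnecessarySimpa false

/-- The signless Laplacian matrix `Q(G) = D(G) + A(G)`. -/
noncomputable def signlessLaplacian {V : Type*} [Fintype V] (G : SimpleGraph V) :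
    Matrix V V ℝ :=
  Matrix.diagonal (fun v => (G.degree v : ℝ)) + G.adjMatrix ℝ

/-- The multiset of eigenvalues of a Hermitian real matrix. -/
noncomputable def eigMultiset {V : Type*} [Fintype V] [DecidableEq V]
    {M : Matrix V V ℝ} (hM : M.IsHermitian) : Multiset ℝ :=
  Finset.univ.val.map hM.eigenvalues

/-- The `i`-th largest eigenvalue (0-indexed) of a Hermitian real matrix. -/
noncomputable def ithEig {V : Type*} [Fintype V] [DecidableEq V]
    {M : Matrix V V ℝ} (hM : M.IsHermitian) (i : ℕ) : ℝ :=
  ((eigMultiset hM).sort (· ≥ ·)).getD i 0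

/-- The join `G ∨ H` of two graphs. -/
def joinG {α β : Type*} (G : SimpleGraph α) (H : SimpleGraph β) : SimpleGraph (α ⊕ β) where
  Adj x y :=
    match x, y with
    | Sum.inl a, Sum.inl b => G.Adj a b
    | Sum.inr a, Sum.inr b => H.Adj a b
    | Sum.inl _, Sum.inr _ => True
    | Sum.inr _, Sum.inl _ => True
  symm := ⟨by
    rintro (a | a) (b | b) h <;> simp_all <;> exact h.symm⟩
  loopless := ⟨by rintro (a | a) h <;> simp_all⟩

/-- The disjoint union `G ∪ H` of two graphs. -/
def sumG {α β : Type*} (G : SimpleGraph α) (H : SimpleGraph β) : SimpleGraph (α ⊕ β) where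
  Adj x y :=
    match x, y with
    | Sum.inl a, Sum.inl b => G.Adj a b
    | Sum.inr a, Sum.inr b => H.Adj a b
    | _, _ => False
  symm := ⟨by
    rintro (a | a) (b | b) h <;> simp_all <;> exact h.symm⟩
  loopless := ⟨by rintro (a | a) h <;> simp_all⟩

/-- The disjoint union of cycles `C_{l 0} ∪ ⋯ ∪ C_{l (t-1)}`. -/
def cyclesUnion (t : ℕ) (l : Fin t → ℕ) : SimpleGraph (Σ i : Fin t, Fin (l i)) where
  Adj x y := ∃ h : x.1 = y.1, (cycleGraph (l y.1)).Adj (h ▸ x.2) y.2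
  symm := ⟨by
    rintro ⟨i, a⟩ ⟨j, b⟩ ⟨h, hadj⟩
    dsimp only at h hadj ⊢
    subst h
    exact ⟨rfl, hadj.symm⟩⟩
  loopless := ⟨by
    rintro ⟨i, a⟩ ⟨h, hadj⟩
    dsimp only at h hadj
    rw [eq_self_iff_true] at h
    exact (cycleGraph (l i)).loopless.irrefl a (by simpa using hadj)⟩

set_option maxHeartbeats 1000000

namespace Cospec

/-- key 4×4 involution -/
noncomputable def Cm : Matrix (Fin 4) (Fin 4) ℝ :=
  !![5/6,-1/6,-1/6,1/2; -1/6,5/6,-1/6,1/2; -1/6,-1/6,5/6,1/2; 1/2,1/2,1/2,-1/2]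
noncomputable def N1m : Matrix (Fin 4) (Fin 4) ℝ := !![3,1,1,0; 1,3,1,0; 1,1,3,0; 0,0,0,1]
noncomputable def N2m : Matrix (Fin 4) (Fin 4) ℝ := !![2,0,0,1; 0,2,0,1; 0,0,2,1; 1,1,1,4]

lemma CmCm : Cm * Cm = 1 := by
  ext a b
  fin_cases a <;> fin_cases b <;>
    simp [Cm, Matrix.mul_apply, Fin.sum_univ_four, Matrix.one_apply] <;> norm_num

lemma CmN : Cm * N1m = N2m * Cm := by
  ext a b
  fin_cases a <;> fin_cases b <;>
    simp [Cm, N1m, N2m, Matrix.mul_apply, Fin.sum_univ_four] <;> norm_num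

lemma Cm_row (a : Fin 4) : ∑ b, Cm a b = 1 := by
  fin_cases a <;> simp [Cm, Fin.sum_univ_four] <;> norm_num

lemma Cm_col (b : Fin 4) : ∑ a, Cm a b = 1 := by
  fin_cases b <;> simp [Cm, Fin.sum_univ_four] <;> norm_num



variable {s t' : ℕ} {l : Fin t' → ℕ}

abbrev Sig (t' : ℕ) (l : Fin t' → ℕ) := (Σ i : Fin t', Fin (l i))
abbrev V1 (s t' : ℕ) (l : Fin t' → ℕ) := Unit ⊕ ((Fin 3 ⊕ Sig t' l) ⊕ Fin s)
abbrev V2 (s t' : ℕ) (l : Fin t' → ℕ) :=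
  Unit ⊕ (((Unit ⊕ Fin 3) ⊕ Sig t' l) ⊕ Fin (s - 1))

def sp : V1 s t' l → Option (Fin 4)
  | Sum.inr (Sum.inl (Sum.inl k)) => some k.castSucc
  | Sum.inr (Sum.inr i) => if i.val = 0 then some 3 else none
  | _ => none

def vtx [NeZero s] : Fin 4 → V1 s t' l :=
  ![Sum.inr (Sum.inl (Sum.inl 0)), Sum.inr (Sum.inl (Sum.inl 1)),
    Sum.inr (Sum.inl (Sum.inl 2)), Sum.inr (Sum.inr 0)]

lemma sp_vtx [NeZero s] (a : Fin 4) : sp (vtx a : V1 s t' l) = some a := by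
  fin_cases a <;> simp [sp, vtx] <;> rfl

lemma sp_eq_some [NeZero s] {x : V1 s t' l} {a : Fin 4} (h : sp x = some a) : x = vtx a := by
  rcases x with _ | ((k | σ) | i)
  · simp [sp] at h
  · simp only [sp] at h
    obtain rfl : k.castSucc = a := Option.some_injective _ h
    fin_cases k <;> rfl
  · simp [sp] at h
  · simp only [sp] at h
    split_ifs at h with h0
    · obtain rfl : (3 : Fin 4) = a := Option.some_injective _ h
      have : i = 0 := Fin.ext h0
      subst this; rfl

lemma vtx_injective [NeZero s] : Function.Injective (vtx : Fin 4 → V1 s t' l) := by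
  intro a b hab
  have := congrArg sp hab
  rw [sp_vtx, sp_vtx] at this
  exact Option.some_injective _ this



noncomputable def Sm : Matrix (V1 s t' l) (V1 s t' l) ℝ := fun x y =>
  match sp x, sp y with
  | some a, some b => Cm a b
  | none, none => if x = y then 1 else 0
  | _, _ => 0

lemma Sm_none_none {x y : V1 s t' l} (hx : sp x = none) (hy : sp y = none) :
    Sm x y = if x = y then 1 else 0 := by
  simp [Sm, hx, hy]

lemma Sm_none_some {x y : V1 s t' l} {a : Fin 4} (hx : sp x = none) (hy : sp y = some a) :
    Sm x y = 0 := by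
  simp [Sm, hx, hy]

lemma Sm_some_none {x y : V1 s t' l} {a : Fin 4} (hx : sp x = some a) (hy : sp y = none) :
    Sm x y = 0 := by
  simp [Sm, hx, hy]

lemma Sm_some_some {x y : V1 s t' l} {a b : Fin 4} (hx : sp x = some a) (hy : sp y = some b) :
    Sm x y = Cm a b := by
  simp [Sm, hx, hy]

/-- collapse a sum over `V1` of a function supported on the special vertices -/
lemma sum_special [NeZero s] (f : V1 s t' l → ℝ) (h : ∀ x, sp x = none → f x = 0) :
    ∑ x, f x = ∑ a : Fin 4, f (vtx a) := by
  rw [Fintype.sum_sum_type, Fintype.sum_sum_type, Fintype.sum_sum_type]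
  have hu : ∑ x : Unit, f (Sum.inl x) = 0 := by
    simp [h (Sum.inl ()) rfl]
  have hσ : ∑ σ : Sig t' l, f (Sum.inr (Sum.inl (Sum.inr σ))) = 0 :=
    Finset.sum_eq_zero fun σ _ => h _ rfl
  have he : ∑ i : Fin s, f (Sum.inr (Sum.inr i)) = f (Sum.inr (Sum.inr 0)) := by
    apply Finset.sum_eq_single (0 : Fin s)
    · intro i _ hi
      apply h
      simp only [sp]
      rw [if_neg]
      exact fun h => hi (Fin.ext (by rw [h]; simp))
    · simp
  rw [hu, hσ, he, Fin.sum_univ_three, Fin.sum_univ_four]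
  simp [vtx]
  try ring

lemma Sm_mul_none [NeZero s] {x : V1 s t' l} (hx : sp x = none)
    (M : Matrix (V1 s t' l) (V1 s t' l) ℝ) (y : V1 s t' l) : ((Sm * M : Matrix (V1 s t' l) (V1 s t' l) ℝ)) x y = M x y := by
  rw [Matrix.mul_apply]
  rw [Finset.sum_eq_single x]
  · rw [Sm_none_none hx hx, if_pos rfl, one_mul]
  · intro k _ hk
    rcases hk' : sp k with _ | a
    · rw [Sm_none_none hx hk', if_neg (show ¬ x = k from fun h => hk h.symm), zero_mul]
    · rw [Sm_none_some hx hk', zero_mul]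
  · simp

lemma mul_Sm_none [NeZero s] {y : V1 s t' l} (hy : sp y = none)
    (M : Matrix (V1 s t' l) (V1 s t' l) ℝ) (x : V1 s t' l) : ((M * Sm : Matrix (V1 s t' l) (V1 s t' l) ℝ)) x y = M x y := by
  rw [Matrix.mul_apply]
  rw [Finset.sum_eq_single y]
  · rw [Sm_none_none hy hy, if_pos rfl, mul_one]
  · intro k _ hk
    rcases hk' : sp k with _ | a
    · rw [Sm_none_none hk' hy, if_neg hk, mul_zero]
    · rw [Sm_some_none hk' hy, mul_zero]
  · simp

lemma Sm_mul_vtx [NeZero s] (a : Fin 4)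
    (M : Matrix (V1 s t' l) (V1 s t' l) ℝ) (y : V1 s t' l) :
    ((Sm * M : Matrix (V1 s t' l) (V1 s t' l) ℝ)) (vtx a) y = ∑ b, Cm a b * M (vtx b) y := by
  rw [Matrix.mul_apply]
  rw [sum_special (f := fun k => Sm (vtx a) k * M k y)
    (h := fun k hk => by show Sm (vtx a) k * M k y = 0; rw [Sm_some_none (sp_vtx a) hk, zero_mul])]
  exact Finset.sum_congr rfl fun b _ => by rw [Sm_some_some (sp_vtx a) (sp_vtx b)]

lemma mul_Sm_vtx [NeZero s] (b : Fin 4)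
    (M : Matrix (V1 s t' l) (V1 s t' l) ℝ) (x : V1 s t' l) :
    ((M * Sm : Matrix (V1 s t' l) (V1 s t' l) ℝ)) x (vtx b) = ∑ a, M x (vtx a) * Cm a b := by
  rw [Matrix.mul_apply]
  rw [sum_special (f := fun k => M x k * Sm k (vtx b))
    (h := fun k hk => by show M x k * Sm k (vtx b) = 0; rw [Sm_none_some hk (sp_vtx b), mul_zero])]
  exact Finset.sum_congr rfl fun a _ => by rw [Sm_some_some (sp_vtx a) (sp_vtx b)]

lemma SmSm [NeZero s] : (Sm : Matrix (V1 s t' l) (V1 s t' l) ℝ) * Sm = 1 := by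
  ext x y
  rcases hx : sp x with _ | a
  · rw [Sm_mul_none hx]
    rcases hy : sp y with _ | b
    · rw [Sm_none_none hx hy, Matrix.one_apply]
    · rw [Sm_none_some hx hy]
      exact (Matrix.one_apply_ne (by rintro rfl; rw [hx] at hy; cases hy)).symm
  · obtain rfl := sp_eq_some hx
    rw [Sm_mul_vtx]
    rcases hy : sp y with _ | b
    · rw [Matrix.one_apply_ne (by rintro rfl; rw [sp_vtx] at hy; cases hy)]
      apply Finset.sum_eq_zero
      intro b _
      rw [Sm_some_none (sp_vtx b) hy, mul_zero]
    · obtain rfl := sp_eq_some hy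
      have : ∑ c, Cm a c * Sm (vtx c : V1 s t' l) (vtx b) = (Cm * Cm) a b := by
        rw [Matrix.mul_apply]
        exact Finset.sum_congr rfl fun c _ => by rw [Sm_some_some (sp_vtx c) (sp_vtx b)]
      rw [this, CmCm, Matrix.one_apply, Matrix.one_apply]
      by_cases hab : a = b
      · simp [hab]
      · rw [if_neg hab, if_neg (fun h => hab (vtx_injective h))]

/-- `Q1` as an explicit matrix; `d` is the apex degree. -/
noncomputable def Q1m (d : ℝ) : Matrix (V1 s t' l) (V1 s t' l) ℝ := fun x y =>
  match x, y with
  | Sum.inl _, Sum.inl _ => d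
  | Sum.inl _, Sum.inr _ => 1
  | Sum.inr _, Sum.inl _ => 1
  | Sum.inr (Sum.inl (Sum.inl k)), Sum.inr (Sum.inl (Sum.inl j)) => if k = j then 3 else 1
  | Sum.inr (Sum.inl (Sum.inr σ)), Sum.inr (Sum.inl (Sum.inr τ)) =>
      (if σ = τ then 3 else 0) + (if (cyclesUnion t' l).Adj σ τ then 1 else 0)
  | Sum.inr (Sum.inr i), Sum.inr (Sum.inr j) => if i = j then 1 else 0
  | _, _ => 0

/-- `Q2`, reindexed to live on `V1`. -/
noncomputable def Q2m (d : ℝ) : Matrix (V1 s t' l) (V1 s t' l) ℝ := fun x y =>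
  match x, y with
  | Sum.inl _, Sum.inl _ => d
  | Sum.inl _, Sum.inr _ => 1
  | Sum.inr _, Sum.inl _ => 1
  | Sum.inr (Sum.inl (Sum.inl k)), Sum.inr (Sum.inl (Sum.inl j)) => if k = j then 2 else 0
  | Sum.inr (Sum.inl (Sum.inl _)), Sum.inr (Sum.inr i) => if i.val = 0 then 1 else 0
  | Sum.inr (Sum.inr i), Sum.inr (Sum.inl (Sum.inl _)) => if i.val = 0 then 1 else 0
  | Sum.inr (Sum.inl (Sum.inr σ)), Sum.inr (Sum.inl (Sum.inr τ)) =>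
      (if σ = τ then 3 else 0) + (if (cyclesUnion t' l).Adj σ τ then 1 else 0)
  | Sum.inr (Sum.inr i), Sum.inr (Sum.inr j) =>
      if i = j then (if i.val = 0 then 4 else 1) else 0
  | _, _ => 0

lemma Q1m_vtx [NeZero s] (d : ℝ) (a b : Fin 4) :
    (Q1m d : Matrix (V1 s t' l) (V1 s t' l) ℝ) (vtx a) (vtx b) = N1m a b := by
  fin_cases a <;> fin_cases b <;> simp [Q1m, vtx, N1m, Fin.ext_iff]

lemma Q2m_vtx [NeZero s] (d : ℝ) (a b : Fin 4) :
    (Q2m d : Matrix (V1 s t' l) (V1 s t' l) ℝ) (vtx a) (vtx b) = N2m a b := by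
  fin_cases a <;> fin_cases b <;> simp [Q2m, vtx, N2m, Fin.ext_iff]

lemma Q1m_vtx_inl [NeZero s] (d : ℝ) (b : Fin 4) :
    (Q1m d : Matrix (V1 s t' l) (V1 s t' l) ℝ) (Sum.inl ()) (vtx b) = 1 := by
  fin_cases b <;> simp [Q1m, vtx]

lemma Q2m_vtx_inl [NeZero s] (d : ℝ) (b : Fin 4) :
    (Q2m d : Matrix (V1 s t' l) (V1 s t' l) ℝ) (Sum.inl ()) (vtx b) = 1 := by
  fin_cases b <;> simp [Q2m, vtx]

lemma Q1m_inl_vtx [NeZero s] (d : ℝ) (b : Fin 4) :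
    (Q1m d : Matrix (V1 s t' l) (V1 s t' l) ℝ) (vtx b) (Sum.inl ()) = 1 := by
  fin_cases b <;> simp [Q1m, vtx]

lemma Q2m_inl_vtx [NeZero s] (d : ℝ) (b : Fin 4) :
    (Q2m d : Matrix (V1 s t' l) (V1 s t' l) ℝ) (vtx b) (Sum.inl ()) = 1 := by
  fin_cases b <;> simp [Q2m, vtx]

/-- The key similarity identity. -/
lemma Q1m_cv_vtx [NeZero s] (d : ℝ) (σ : Sig t' l) (b : Fin 4) :
    (Q1m d : Matrix (V1 s t' l) (V1 s t' l) ℝ) (Sum.inr (Sum.inl (Sum.inr σ))) (vtx b) = 0 := by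
  fin_cases b <;> simp [Q1m, vtx]

lemma Q2m_cv_vtx [NeZero s] (d : ℝ) (σ : Sig t' l) (b : Fin 4) :
    (Q2m d : Matrix (V1 s t' l) (V1 s t' l) ℝ) (Sum.inr (Sum.inl (Sum.inr σ))) (vtx b) = 0 := by
  fin_cases b <;> simp [Q2m, vtx]

lemma Q1m_vtx_cv [NeZero s] (d : ℝ) (σ : Sig t' l) (b : Fin 4) :
    (Q1m d : Matrix (V1 s t' l) (V1 s t' l) ℝ) (vtx b) (Sum.inr (Sum.inl (Sum.inr σ))) = 0 := by
  fin_cases b <;> simp [Q1m, vtx]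

lemma Q2m_vtx_cv [NeZero s] (d : ℝ) (σ : Sig t' l) (b : Fin 4) :
    (Q2m d : Matrix (V1 s t' l) (V1 s t' l) ℝ) (vtx b) (Sum.inr (Sum.inl (Sum.inr σ))) = 0 := by
  fin_cases b <;> simp [Q2m, vtx]

lemma Q1m_ev_vtx [NeZero s] (d : ℝ) {i : Fin s} (hi : ¬ i.val = 0) (b : Fin 4) :
    (Q1m d : Matrix (V1 s t' l) (V1 s t' l) ℝ) (Sum.inr (Sum.inr i)) (vtx b) = 0 := by
  fin_cases b <;> simp [Q1m, vtx, hi, Fin.ext_iff] <;> omega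

lemma Q2m_ev_vtx [NeZero s] (d : ℝ) {i : Fin s} (hi : ¬ i.val = 0) (b : Fin 4) :
    (Q2m d : Matrix (V1 s t' l) (V1 s t' l) ℝ) (Sum.inr (Sum.inr i)) (vtx b) = 0 := by
  fin_cases b <;> simp [Q2m, vtx, hi, Fin.ext_iff] <;> omega

lemma Q1m_vtx_ev [NeZero s] (d : ℝ) {i : Fin s} (hi : ¬ i.val = 0) (b : Fin 4) :
    (Q1m d : Matrix (V1 s t' l) (V1 s t' l) ℝ) (vtx b) (Sum.inr (Sum.inr i)) = 0 := by
  fin_cases b <;> simp [Q1m, vtx, Fin.ext_iff] <;> omega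

lemma Q2m_vtx_ev [NeZero s] (d : ℝ) {i : Fin s} (hi : ¬ i.val = 0) (b : Fin 4) :
    (Q2m d : Matrix (V1 s t' l) (V1 s t' l) ℝ) (vtx b) (Sum.inr (Sum.inr i)) = 0 := by
  fin_cases b <;> simp [Q2m, vtx, hi, Fin.ext_iff] <;> omega

/-- The key similarity identity. -/
lemma key [NeZero s] (d : ℝ) :
    (Sm * Q1m d : Matrix (V1 s t' l) (V1 s t' l) ℝ) = Q2m d * Sm := by
  ext x y
  rcases hx : sp x with _ | a
  · rw [Sm_mul_none hx]
    rcases hy : sp y with _ | c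
    · -- both nonspecial
      rw [mul_Sm_none hy]
      rcases x with u | ((k | σ) | i)
      · rcases y with u' | ((k' | τ) | j)
        · rfl
        · exact absurd hy (by simp [sp])
        · rfl
        · simp only [sp] at hy
          rw [ite_eq_right_iff] at hy
          have hj : ¬ j.val = 0 := fun h => by cases hy h
          rfl
      · exact absurd hx (by simp [sp])
      · rcases y with u' | ((k' | τ) | j)
        · rfl
        · exact absurd hy (by simp [sp])
        · rfl
        · rfl
      · simp only [sp] at hx
        rw [ite_eq_right_iff] at hx
        have hi : ¬ i.val = 0 := fun h => by cases hx h
        rcases y with u' | ((k' | τ) | j)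
        · rfl
        · exact absurd hy (by simp [sp])
        · rfl
        · simp only [sp] at hy
          rw [ite_eq_right_iff] at hy
          have hj : ¬ j.val = 0 := fun h => by cases hy h
          show (if i = j then (1:ℝ) else 0) = _
          simp only [Q2m, hi]
          split <;> rfl
    · -- x nonspecial, y special
      obtain rfl := sp_eq_some hy
      rw [mul_Sm_vtx]
      rcases x with u | ((k | σ) | i)
      · cases u
        rw [Q1m_vtx_inl,
          Finset.sum_congr rfl (fun b _ => by rw [Q2m_vtx_inl (s := s) (t' := t') (l := l) d b, one_mul])]
        exact (Cm_col c).symm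
      · exact absurd hx (by simp [sp])
      · rw [Q1m_cv_vtx]
        exact (Finset.sum_eq_zero fun b _ => by rw [Q2m_cv_vtx, zero_mul]).symm
      · simp only [sp] at hx
        rw [ite_eq_right_iff] at hx
        have hi : ¬ i.val = 0 := fun h => by cases hx h
        rw [Q1m_ev_vtx d hi]
        exact (Finset.sum_eq_zero fun b _ => by rw [Q2m_ev_vtx d hi, zero_mul]).symm
  · -- x special
    obtain rfl := sp_eq_some hx
    rw [Sm_mul_vtx]
    rcases hy : sp y with _ | c
    · rw [mul_Sm_none hy]
      rcases y with u | ((k | τ) | j)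
      · cases u
        rw [Q2m_inl_vtx,
          Finset.sum_congr rfl (fun b _ => by rw [Q1m_inl_vtx (s := s) (t' := t') (l := l) d b, mul_one])]
        exact Cm_row a
      · exact absurd hy (by simp [sp])
      · rw [Q2m_vtx_cv]
        exact Finset.sum_eq_zero fun b _ => by rw [Q1m_vtx_cv, mul_zero]
      · simp only [sp] at hy
        rw [ite_eq_right_iff] at hy
        have hj : ¬ j.val = 0 := fun h => by cases hy h
        rw [Q2m_vtx_ev d hj]
        exact Finset.sum_eq_zero fun b _ => by rw [Q1m_vtx_ev d hj, mul_zero]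
    · obtain rfl := sp_eq_some hy
      rw [mul_Sm_vtx]
      calc ∑ b, Cm a b * (Q1m d : Matrix (V1 s t' l) (V1 s t' l) ℝ) (vtx b) (vtx c)
          = ∑ b, Cm a b * N1m b c := by
            exact Finset.sum_congr rfl fun b _ => by rw [Q1m_vtx]
        _ = (Cm * N1m) a c := (Matrix.mul_apply).symm
        _ = (N2m * Cm) a c := by rw [CmN]
        _ = ∑ b, N2m a b * Cm b c := Matrix.mul_apply
        _ = ∑ b, (Q2m d : Matrix (V1 s t' l) (V1 s t' l) ℝ) (vtx a) (vtx b) * Cm b c := by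
            exact Finset.sum_congr rfl fun b _ => by rw [Q2m_vtx]

abbrev Gr1 (s t' : ℕ) (l : Fin t' → ℕ) : SimpleGraph (V1 s t' l) :=
  joinG (⊥ : SimpleGraph Unit)
    (sumG (sumG (cycleGraph 3) (cyclesUnion t' l)) (⊥ : SimpleGraph (Fin s)))

abbrev Gr2 (s t' : ℕ) (l : Fin t' → ℕ) : SimpleGraph (V2 s t' l) :=
  joinG (⊥ : SimpleGraph Unit)
    (sumG (sumG (completeBipartiteGraph Unit (Fin 3)) (cyclesUnion t' l))
      (⊥ : SimpleGraph (Fin (s - 1))))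

lemma degree_eq_sum {V : Type*} [Fintype V] (G : SimpleGraph V) (v : V)
    [inst : Fintype (G.neighborSet v)] :
    G.degree v = ∑ w, if G.Adj v w then 1 else 0 := by
  rw [← card_neighborFinset_eq_degree]
  have h : G.neighborFinset v = Finset.univ.filter (fun w => G.Adj v w) := by
    ext w; simp [mem_neighborFinset]
  rw [h, Finset.card_filter]

lemma cycle_sum {n : ℕ} (hn : 3 ≤ n) (b : Fin n) :
    (∑ a, if (cycleGraph n).Adj b a then 1 else 0) = 2 := by
  obtain ⟨k, rfl⟩ : ∃ k, n = k + 3 := ⟨n - 3, by omega⟩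
  have h2 : (cycleGraph (k+3)).degree b = 2 := by
    convert cycleGraph_degree_three_le (v := b) using 2
  rw [← h2, degree_eq_sum]
  exact Finset.sum_congr rfl fun a _ => by congr!

lemma cyclesUnion_adj_same {i : Fin t'} {a b : Fin (l i)} :
    (cyclesUnion t' l).Adj ⟨i,a⟩ ⟨i,b⟩ ↔ (cycleGraph (l i)).Adj a b :=
  ⟨fun ⟨_, hadj⟩ => hadj, fun h => ⟨rfl, h⟩⟩

lemma cyclesUnion_adj_ne {i j : Fin t'} (hne : i ≠ j) {a : Fin (l i)} {b : Fin (l j)} :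
    ¬ (cyclesUnion t' l).Adj ⟨i,a⟩ ⟨j,b⟩ := fun ⟨h,_⟩ => hne h

lemma sig_sum (hl : ∀ i, 3 ≤ l i) (i : Fin t') (b : Fin (l i)) :
    (∑ x : Sig t' l, if (cyclesUnion t' l).Adj ⟨i,b⟩ x then 1 else 0) = 2 := by
  rw [← Finset.univ_sigma_univ, Finset.sum_sigma]
  rw [Finset.sum_eq_single i]
  · simp only [cyclesUnion_adj_same]
    exact cycle_sum (hl i) b
  · intro j _ hj
    exact Finset.sum_eq_zero fun a _ => if_neg (cyclesUnion_adj_ne (Ne.symm hj))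
  · simp

lemma deg1_t (k : Fin 3) :
    (Gr1 s t' l).degree (Sum.inr (Sum.inl (Sum.inl k))) = 3 := by
  rw [degree_eq_sum]
  rw [Fintype.sum_sum_type, Fintype.sum_sum_type, Fintype.sum_sum_type]
  have h1 : ∀ τ : Sig t' l,
      ¬ (Gr1 s t' l).Adj (Sum.inr (Sum.inl (Sum.inl k))) (Sum.inr (Sum.inl (Sum.inr τ))) := by
    intro τ h; exact h
  have h2 : ∑ j : Fin 3, (if (Gr1 s t' l).Adj (Sum.inr (Sum.inl (Sum.inl k)))
      (Sum.inr (Sum.inl (Sum.inl j))) then 1 else 0) = 2 := by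
    have : ∀ j : Fin 3, (Gr1 s t' l).Adj (Sum.inr (Sum.inl (Sum.inl k)))
        (Sum.inr (Sum.inl (Sum.inl j))) ↔ k ≠ j := by
      intro j
      show (cycleGraph 3).Adj k j ↔ k ≠ j
      rw [cycleGraph_three_eq_top]; simp
    simp only [this]
    fin_cases k <;> simp [Fin.sum_univ_three] <;> norm_num
  have h0 : (Gr1 s t' l).Adj (Sum.inr (Sum.inl (Sum.inl k))) (Sum.inl ()) := trivial
  have h3 : ∀ i : Fin s, ¬ (Gr1 s t' l).Adj (Sum.inr (Sum.inl (Sum.inl k)))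
      (Sum.inr (Sum.inr i)) := fun i h => h
  simp [h1, h2, h0, h3]

@[simp] lemma joinG_adj_ll {α β : Type*} {G : SimpleGraph α} {H : SimpleGraph β} {a b : α} :
    (joinG G H).Adj (Sum.inl a) (Sum.inl b) ↔ G.Adj a b := Iff.rfl
@[simp] lemma joinG_adj_lr {α β : Type*} {G : SimpleGraph α} {H : SimpleGraph β} {a : α} {b : β} :
    (joinG G H).Adj (Sum.inl a) (Sum.inr b) := trivial
@[simp] lemma joinG_adj_rl {α β : Type*} {G : SimpleGraph α} {H : SimpleGraph β} {a : β} {b : α} :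
    (joinG G H).Adj (Sum.inr a) (Sum.inl b) := trivial
@[simp] lemma joinG_adj_rr {α β : Type*} {G : SimpleGraph α} {H : SimpleGraph β} {a b : β} :
    (joinG G H).Adj (Sum.inr a) (Sum.inr b) ↔ H.Adj a b := Iff.rfl
@[simp] lemma sumG_adj_ll {α β : Type*} {G : SimpleGraph α} {H : SimpleGraph β} {a b : α} :
    (sumG G H).Adj (Sum.inl a) (Sum.inl b) ↔ G.Adj a b := Iff.rfl
@[simp] lemma sumG_adj_lr {α β : Type*} {G : SimpleGraph α} {H : SimpleGraph β} {a : α} {b : β} :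
    ¬ (sumG G H).Adj (Sum.inl a) (Sum.inr b) := fun h => h
@[simp] lemma sumG_adj_rl {α β : Type*} {G : SimpleGraph α} {H : SimpleGraph β} {a : β} {b : α} :
    ¬ (sumG G H).Adj (Sum.inr a) (Sum.inl b) := fun h => h
@[simp] lemma sumG_adj_rr {α β : Type*} {G : SimpleGraph α} {H : SimpleGraph β} {a b : β} :
    (sumG G H).Adj (Sum.inr a) (Sum.inr b) ↔ H.Adj a b := Iff.rfl

@[simp] lemma cycleGraph3_adj {k j : Fin 3} : (cycleGraph 3).Adj k j ↔ k ≠ j := by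
  rw [cycleGraph_three_eq_top]; simp

lemma deg1_u :
    (Gr1 s t' l).degree (Sum.inl ()) = 3 + Fintype.card (Sig t' l) + s := by
  rw [degree_eq_sum, Fintype.sum_sum_type, Fintype.sum_sum_type, Fintype.sum_sum_type]
  simp [Finset.card_univ]

lemma deg1_c (hl : ∀ i, 3 ≤ l i) (σ : Sig t' l) :
    (Gr1 s t' l).degree (Sum.inr (Sum.inl (Sum.inr σ))) = 3 := by
  obtain ⟨i, b⟩ := σ
  rw [degree_eq_sum, Fintype.sum_sum_type, Fintype.sum_sum_type, Fintype.sum_sum_type]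
  have h3 := sig_sum hl i b
  simp [h3, -Finset.sum_boole]

lemma deg1_e (i : Fin s) :
    (Gr1 s t' l).degree (Sum.inr (Sum.inr i)) = 1 := by
  rw [degree_eq_sum, Fintype.sum_sum_type, Fintype.sum_sum_type, Fintype.sum_sum_type]
  simp

lemma deg2_u :
    (Gr2 s t' l).degree (Sum.inl ()) = 4 + Fintype.card (Sig t' l) + (s - 1) := by
  rw [degree_eq_sum, Fintype.sum_sum_type, Fintype.sum_sum_type, Fintype.sum_sum_type,
    Fintype.sum_sum_type]
  simp [Finset.card_univ]

lemma deg2_ctr (u : Unit) :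
    (Gr2 s t' l).degree (Sum.inr (Sum.inl (Sum.inl (Sum.inl u)))) = 4 := by
  rw [degree_eq_sum, Fintype.sum_sum_type, Fintype.sum_sum_type, Fintype.sum_sum_type,
    Fintype.sum_sum_type]
  simp

lemma deg2_leaf (k : Fin 3) :
    (Gr2 s t' l).degree (Sum.inr (Sum.inl (Sum.inl (Sum.inr k)))) = 2 := by
  rw [degree_eq_sum, Fintype.sum_sum_type, Fintype.sum_sum_type, Fintype.sum_sum_type,
    Fintype.sum_sum_type]
  simp

lemma deg2_c (hl : ∀ i, 3 ≤ l i) (σ : Sig t' l) :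
    (Gr2 s t' l).degree (Sum.inr (Sum.inl (Sum.inr σ))) = 3 := by
  obtain ⟨i, b⟩ := σ
  rw [degree_eq_sum, Fintype.sum_sum_type, Fintype.sum_sum_type, Fintype.sum_sum_type,
    Fintype.sum_sum_type]
  have h3 := sig_sum hl i b
  simp [h3, -Finset.sum_boole]

lemma deg2_e (j : Fin (s - 1)) :
    (Gr2 s t' l).degree (Sum.inr (Sum.inr j)) = 1 := by
  rw [degree_eq_sum, Fintype.sum_sum_type, Fintype.sum_sum_type, Fintype.sum_sum_type,
    Fintype.sum_sum_type]
  simp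

lemma slap_apply {V : Type*} [Fintype V] (G : SimpleGraph V) (x y : V) :
    signlessLaplacian G x y =
      (if x = y then (G.degree x : ℝ) else 0) + (if G.Adj x y then 1 else 0) := by
  simp [signlessLaplacian, Matrix.add_apply, Matrix.diagonal_apply]

lemma Q1_eq (hl : ∀ i, 3 ≤ l i) :
    signlessLaplacian (Gr1 s t' l) =
      Q1m (((3 + Fintype.card (Sig t' l) + s : ℕ) : ℝ)) := by
  ext x y
  rw [slap_apply]
  rcases x with u | ((k | σ) | i) <;> rcases y with u' | ((k' | τ) | j)
  · cases u; cases u'; simp [Q1m, deg1_u]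
  · simp [Q1m]
  · simp [Q1m]
  · simp [Q1m]
  · simp [Q1m]
  · -- t k, t k'
    by_cases hkk : k = k'
    · subst hkk; simp [Q1m, deg1_t]
    · simp [Q1m, hkk]
  · simp [Q1m]
  · simp [Q1m]
  · simp [Q1m]
  · simp [Q1m]
  · -- cv σ, cv τ
    by_cases hst : σ = τ
    · subst hst
      simp [Q1m, deg1_c hl, (cyclesUnion t' l).loopless.irrefl σ]
    · simp [Q1m, hst]
  · simp [Q1m]
  · simp [Q1m]
  · simp [Q1m]
  · simp [Q1m]
  · -- ev i, ev j
    by_cases hij : i = j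
    · subst hij; simp [Q1m, deg1_e]
    · simp [Q1m, hij]

def emap [NeZero s] : V1 s t' l → V2 s t' l
  | Sum.inl u => Sum.inl u
  | Sum.inr (Sum.inl (Sum.inl k)) => Sum.inr (Sum.inl (Sum.inl (Sum.inr k)))
  | Sum.inr (Sum.inl (Sum.inr σ)) => Sum.inr (Sum.inl (Sum.inr σ))
  | Sum.inr (Sum.inr i) =>
      if _ : i.val = 0 then Sum.inr (Sum.inl (Sum.inl (Sum.inl ())))
      else Sum.inr (Sum.inr (Fin.mk (i.val - 1) (by have := i.isLt; omega)))

def emapInv [NeZero s] : V2 s t' l → V1 s t' l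
  | Sum.inl u => Sum.inl u
  | Sum.inr (Sum.inl (Sum.inl (Sum.inl _))) =>
      Sum.inr (Sum.inr (Fin.mk 0 (Nat.pos_of_ne_zero (NeZero.ne s))))
  | Sum.inr (Sum.inl (Sum.inl (Sum.inr k))) => Sum.inr (Sum.inl (Sum.inl k))
  | Sum.inr (Sum.inl (Sum.inr σ)) => Sum.inr (Sum.inl (Sum.inr σ))
  | Sum.inr (Sum.inr j) => Sum.inr (Sum.inr (Fin.mk (j.val + 1) (by have := j.isLt; omega)))

def equivV [NeZero s] : V1 s t' l ≃ V2 s t' l where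
  toFun := emap
  invFun := emapInv
  left_inv := by
    rintro (u | ((k | σ) | i))
    · rfl
    · rfl
    · rfl
    · by_cases h : i.val = 0
      · simp only [emap, dif_pos h, emapInv]
        congr 2
        exact Fin.ext h.symm
      · simp only [emap, dif_neg h, emapInv]
        congr 2
        apply Fin.ext
        simp
        omega
  right_inv := by
    rintro (u | (((u' | k) | σ) | j))
    · rfl
    · cases u'
      simp [emapInv, emap]
    · rfl
    · rfl
    · simp only [emapInv, emap]
      rw [dif_neg (by simp)]
      congr 2

lemma emap_ev0 [NeZero s] {i : Fin s} (hi : i.val = 0) :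
    (emap (Sum.inr (Sum.inr i)) : V2 s t' l) = Sum.inr (Sum.inl (Sum.inl (Sum.inl ()))) := by
  simp only [emap]
  rw [dif_pos hi]

lemma emap_evpos [NeZero s] {i : Fin s} (hi : ¬ i.val = 0) :
    (emap (Sum.inr (Sum.inr i)) : V2 s t' l) =
      Sum.inr (Sum.inr (Fin.mk (i.val - 1) (by have := i.isLt; omega))) := by
  simp only [emap]
  rw [dif_neg hi]

lemma Q2_eq [NeZero s] (hl : ∀ i, 3 ≤ l i) (x y : V1 s t' l) :
    signlessLaplacian (Gr2 s t' l) (emap x) (emap y) =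
      Q2m (((3 + Fintype.card (Sig t' l) + s : ℕ) : ℝ)) x y := by
  have hs1 : 1 ≤ s := Nat.pos_of_ne_zero (NeZero.ne s)
  have hd : ((4 + Fintype.card (Sig t' l) + (s - 1) : ℕ) : ℝ)
      = ((3 + Fintype.card (Sig t' l) + s : ℕ) : ℝ) := by
    congr 1
    omega
  rw [slap_apply]
  rcases x with u | ((k | σ) | i) <;> rcases y with u' | ((k' | τ) | j)
  · cases u; cases u'
    simp only [emap]
    rw [if_pos]; erw [deg2_u]; rw [hd]
    swap
    · trivial
    have hnadj : ¬ (Gr2 s t' l).Adj (Sum.inl ()) (Sum.inl ()) := fun h => h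
    simp [hnadj, Q2m]
  · simp [emap, Q2m]
  · simp [emap, Q2m]
  · cases u
    by_cases hj : j.val = 0
    · rw [emap_ev0 hj]; simp [emap, Q2m, hj]
    · rw [emap_evpos hj]; simp [emap, Q2m, hj]
  · simp [emap, Q2m]
  · by_cases hkk : k = k'
    · subst hkk; simp [emap, Q2m, deg2_leaf]; erw [deg2_leaf]; norm_num
    · simp [emap, Q2m, hkk]
  · simp [emap, Q2m]
  · by_cases hj : j.val = 0
    · rw [emap_ev0 hj]; simp [emap, Q2m, hj]
    · rw [emap_evpos hj]; simp [emap, Q2m, hj]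
  · simp [emap, Q2m]
  · simp [emap, Q2m]
  · by_cases hst : σ = τ
    · subst hst
      simp [emap, Q2m, deg2_c hl, (cyclesUnion t' l).loopless.irrefl σ]; erw [deg2_c hl]; norm_num
    · simp [emap, Q2m, hst]
  · by_cases hj : j.val = 0
    · rw [emap_ev0 hj]; simp [emap, Q2m, hj]
    · rw [emap_evpos hj]; simp [emap, Q2m, hj]
  · cases u'
    by_cases hi : i.val = 0
    · rw [emap_ev0 hi]; simp [emap, Q2m, hi]
    · rw [emap_evpos hi]; simp [emap, Q2m, hi]
  · by_cases hi : i.val = 0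
    · rw [emap_ev0 hi]; simp [emap, Q2m, hi]
    · rw [emap_evpos hi]; simp [emap, Q2m, hi]
  · by_cases hi : i.val = 0
    · rw [emap_ev0 hi]; simp [emap, Q2m, hi]
    · rw [emap_evpos hi]; simp [emap, Q2m, hi]
  · by_cases hi : i.val = 0 <;> by_cases hj : j.val = 0
    · have hij : i = j := Fin.ext (hi.trans hj.symm)
      subst hij
      rw [emap_ev0 hi]
      simp [Q2m, hi, deg2_ctr]
    · have hij : ¬ i = j := fun h => hj (h ▸ hi)
      rw [emap_ev0 hi, emap_evpos hj]
      simp [Q2m, hi, hj, hij]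
    · have hij : ¬ i = j := fun h => hi (h ▸ hj)
      rw [emap_evpos hi, emap_ev0 hj]
      simp [Q2m, hi, hj, hij]
    · by_cases hij : i = j
      · subst hij
        rw [emap_evpos hi]
        simp [Q2m, hi, deg2_e]
      · have hne : ¬ (i.val - 1 = j.val - 1) := by
          have := i.isLt; have := j.isLt
          intro h
          exact hij (Fin.ext (by omega))
        rw [emap_evpos hi, emap_evpos hj]
        simp [Q2m, hi, hj, hij, Fin.ext_iff, hne]

theorem conj_charpoly {n : Type*} [Fintype n] [DecidableEq n] (S M : Matrix n n ℝ) (h : S * S = 1) :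
    (S * M * S).charpoly = M.charpoly := by
  have hmap : ∀ A B : Matrix n n ℝ, (A * B).map (Polynomial.C (R := ℝ)) = A.map Polynomial.C * B.map Polynomial.C := fun A B => Matrix.map_mul
  have h' : S.map (Polynomial.C (R := ℝ)) * S.map Polynomial.C = 1 := by
    rw [← hmap, h]; simp
  have hc : charmatrix (S * M * S) = S.map Polynomial.C * charmatrix M * S.map Polynomial.C := by
    unfold Matrix.charmatrix
    rw [Matrix.mul_sub, Matrix.sub_mul]
    simp only [RingHom.mapMatrix_apply]
    rw [hmap, hmap]
    congr 1
    have hcomm : S.map (Polynomial.C (R := ℝ)) * Matrix.scalar n Polynomial.X = Matrix.scalar n Polynomial.X * S.map Polynomial.C := by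
      have : (Matrix.scalar n (Polynomial.X : Polynomial ℝ)) = (Polynomial.X : Polynomial ℝ) • (1 : Matrix n n (Polynomial ℝ)) := by
        rw [Matrix.smul_one_eq_diagonal]; rfl
      rw [this, mul_smul_comm, smul_mul_assoc, mul_one, one_mul]
    rw [mul_assoc, ← hcomm, ← mul_assoc, h', one_mul]
  have hdet : (S.map (Polynomial.C (R := ℝ))).det * (S.map Polynomial.C).det = 1 := by
    rw [← Matrix.det_mul, h', Matrix.det_one]
  rw [Matrix.charpoly, hc, Matrix.det_mul, Matrix.det_mul, Matrix.charpoly]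
  rw [mul_right_comm, hdet, one_mul]

lemma iso_degree {V W : Type*} [Fintype V] [Fintype W] {G : SimpleGraph V} {H : SimpleGraph W}
    (φ : G ≃g H) (v : V) : H.degree (φ v) = G.degree v := by
  rw [← card_neighborSet_eq_degree, ← card_neighborSet_eq_degree]
  exact Fintype.card_congr (φ.mapNeighborSet v).symm

end Cospec

open Cospec in
theorem cospectral_mates (s t' : ℕ) (hs : 1 ≤ s)
    (l : Fin t' → ℕ) (hl : ∀ i, 3 ≤ l i) :
    let G1 := joinG (⊥ : SimpleGraph Unit)
      (sumG (sumG (cycleGraph 3) (cyclesUnion t' l)) (⊥ : SimpleGraph (Fin s)))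
    let G2 := joinG (⊥ : SimpleGraph Unit)
      (sumG (sumG (completeBipartiteGraph Unit (Fin 3)) (cyclesUnion t' l))
        (⊥ : SimpleGraph (Fin (s - 1))))
    ¬ Nonempty (G1 ≃g G2) ∧
      (signlessLaplacian G1).charpoly = (signlessLaplacian G2).charpoly := by
  intro G1 G2
  haveI : NeZero s := ⟨by omega⟩
  constructor
  · rintro ⟨φ⟩
    have hv : (Gr1 s t' l).degree
        ((φ.symm : Gr2 s t' l ≃g Gr1 s t' l) (Sum.inr (Sum.inl (Sum.inl (Sum.inr 0))))) = 2 :=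
      (iso_degree φ.symm _).trans (deg2_leaf 0)
    rcases h : (φ.symm : Gr2 s t' l ≃g Gr1 s t' l) (Sum.inr (Sum.inl (Sum.inl (Sum.inr 0))))
      with u | ((k | σ) | i)
    · rw [h, deg1_u] at hv
      omega
    · rw [h, deg1_t] at hv
      omega
    · rw [h, deg1_c hl] at hv
      omega
    · rw [h, deg1_e] at hv
      omega
  · show (signlessLaplacian (Gr1 s t' l)).charpoly
      = (signlessLaplacian (Gr2 s t' l)).charpoly
    have h2 : (signlessLaplacian (Gr2 s t' l)).charpoly
        = (Q2m (((3 + Fintype.card (Sig t' l) + s : ℕ) : ℝ))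
            : Matrix (V1 s t' l) (V1 s t' l) ℝ).charpoly := by
      rw [← Matrix.charpoly_reindex
        (equivV : V1 s t' l ≃ V2 s t' l).symm (signlessLaplacian (Gr2 s t' l))]
      congr 1
      ext x y
      rw [Matrix.reindex_apply, Matrix.submatrix_apply, Equiv.symm_symm]
      exact Q2_eq hl x y
    rw [Q1_eq hl, h2]
    have h3 : (Q2m (((3 + Fintype.card (Sig t' l) + s : ℕ) : ℝ))
          : Matrix (V1 s t' l) (V1 s t' l) ℝ)
        = Sm * Q1m (((3 + Fintype.card (Sig t' l) + s : ℕ) : ℝ)) * Sm := by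
      rw [key, mul_assoc, SmSm, mul_one]
    rw [h3, conj_charpoly _ _ SmSm]
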